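/- Let Π = (I_n)_{n∈ω} be an interval partition of ω (intervals listed in natural order) and define F_Π : ω → ω by F_Π(k) = max I_{n+2} where n is such that k ∈ I_n. Suppose g : ω → ω eventually majorizes F_Π (F_Π(k) ≤ g(k) for all but finitely many k), and let Σ be an interval partition of ω each of whose intervals [a,b] satisfies g(a) ≤ b. Then M(Π) ⊆ M(Σ). -/

import Mathlib

open Set Cardinal MeasureTheory

/-- The characteristic function of a set of naturals, as a point of Cantor space `2^ω`. -/
noncomputable def chi (x : Set ℕ) : ℕ → Bool := fun n => @decide (n ∈ x) (Classical.dec _)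

/-- `[ω]^ω`: the collection of infinite subsets of ω. -/
def InfSets : Set (Set ℕ) := {x : Set ℕ | x.Infinite}

/-- `X ⊆ [ω]^ω` is downward closed for almost-inclusion `x ≤ y ↔ (x \ y).Finite`. -/
def DownClosed (X : Set (Set ℕ)) : Prop :=
  ∀ y ∈ X, ∀ x : Set ℕ, x.Infinite → (x \ y).Finite → x ∈ X

/-- `X` is meager as a subset of Cantor space `2^ω` (product topology on `ℕ → Bool`). -/
def MeagerSet (X : Set (Set ℕ)) : Prop := IsMeagre (chi '' X)

/-- A partition of ω into consecutive finite intervals `I n = [e n, e (n+1))`. -/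
structure IntervalPartition where
  e : ℕ → ℕ
  zero : e 0 = 0
  mono : StrictMono e

/-- The `n`-th interval of an interval partition. -/
def IntervalPartition.I (P : IntervalPartition) (n : ℕ) : Set ℕ :=
  Set.Ico (P.e n) (P.e (n + 1))

/-- `X ⊆ [ω]^ω` is groupwise dense: downward closed, and for every partition of ω into
finite intervals, the union of some infinitely many of the intervals belongs to `X`. -/
def GroupwiseDense (X : Set (Set ℕ)) : Prop :=
  X ⊆ InfSets ∧ DownClosed X ∧
    ∀ P : IntervalPartition, ∃ A : Set ℕ, A.Infinite ∧ (⋃ n ∈ A, P.I n) ∈ X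

/-- `g` eventually majorizes `f`. -/
def EvMaj (f g : ℕ → ℕ) : Prop := ∀ᶠ k in Filter.atTop, f k ≤ g k

/-- `M(Π)`: the infinite subsets of ω including only finitely many intervals of `Π`. -/
def MSet (P : IntervalPartition) : Set (Set ℕ) :=
  {x : Set ℕ | x.Infinite ∧ {n : ℕ | P.I n ⊆ x}.Finite}

/-- The index `n` of the interval `I n` of `P` containing `k`. -/
def idx (P : IntervalPartition) (k : ℕ) : ℕ := Nat.findGreatest (fun n => P.e n ≤ k) k

/-- `F_Π(k)`: the largest element of `I (n+2)`, where `k ∈ I n`. -/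
def FPart (P : IntervalPartition) (k : ℕ) : ℕ := P.e (idx P k + 3) - 1

/-- The groupwise density number 𝔤. -/
noncomputable def gNum : Cardinal :=
  sInf {c : Cardinal | ∃ S : Set (Set (Set ℕ)), (∀ G ∈ S, GroupwiseDense G) ∧
    #S = c ∧ InfSets ∩ ⋂₀ S = ∅}

/-- The bounding number 𝔟. -/
noncomputable def bNum : Cardinal :=
  sInf {c : Cardinal | ∃ F : Set (ℕ → ℕ), #F = c ∧ ∀ g : ℕ → ℕ, ∃ f ∈ F, ¬ EvMaj f g}

/-- The dominating number 𝔡. -/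
noncomputable def dNum : Cardinal :=
  sInf {c : Cardinal | ∃ F : Set (ℕ → ℕ), #F = c ∧ ∀ g : ℕ → ℕ, ∃ f ∈ F, EvMaj g f}

/-- `B_M`: the ideal of meager downward-closed subsets of `[ω]^ω`. -/
def BM : Set (Set (Set ℕ)) := {X : Set (Set ℕ) | X ⊆ InfSets ∧ DownClosed X ∧ MeagerSet X}

/-- `add(B_M)`. -/
noncomputable def addBM : Cardinal :=
  sInf {c : Cardinal | ∃ S : Set (Set (Set ℕ)), S ⊆ BM ∧ #S = c ∧ ⋃₀ S ∉ BM}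

/-- `cov(B_M)`. -/
noncomputable def covBM : Cardinal :=
  sInf {c : Cardinal | ∃ S : Set (Set (Set ℕ)), S ⊆ BM ∧ #S = c ∧
    {x : Set ℕ | x.Infinite ∧ xᶜ.Infinite} ⊆ ⋃₀ S}

/-- `unif(B_M)`. -/
noncomputable def unifBM : Cardinal :=
  sInf {c : Cardinal | ∃ S : Set (Set ℕ), (∀ x ∈ S, x.Infinite ∧ xᶜ.Infinite) ∧ #S = c ∧
    ∀ X ∈ BM, ¬ S ⊆ X}

/-- `cof(B_M)`. -/
noncomputable def cofBM : Cardinal :=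
  sInf {c : Cardinal | ∃ C : Set (Set (Set ℕ)), C ⊆ BM ∧ #C = c ∧
    ∀ X ∈ BM, ∃ Y ∈ C, X ⊆ Y}

/-- `X ⊆ [ω]^ω` is dense: every infinite `A` has an infinite subset `B ∈ X`. -/
def DenseM (X : Set (Set ℕ)) : Prop :=
  ∀ A : Set ℕ, A.Infinite → ∃ B ⊆ A, B.Infinite ∧ B ∈ X

/-- 𝔤′: the least number of non-meager downward-closed ideals on ω with empty intersection. -/
noncomputable def gNum' : Cardinal :=
  sInf {c : Cardinal | ∃ S : Set (Set (Set ℕ)),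
    (∀ X ∈ S, X ⊆ InfSets ∧ DownClosed X ∧ (∀ x ∈ X, ∀ y ∈ X, x ∪ y ∈ X) ∧ ¬ MeagerSet X) ∧
    #S = c ∧ InfSets ∩ ⋂₀ S = ∅}

/-- The splitting number 𝔰. -/
noncomputable def sNum : Cardinal :=
  sInf {c : Cardinal | ∃ S : Set (Set ℕ), #S = c ∧
    ∀ x : Set ℕ, x.Infinite → ∃ y ∈ S, (x ∩ y).Infinite ∧ (x \ y).Infinite}

/-- Lemma 1: if `g` eventually majorizes `F_Π` and every interval `[a,b]` of `Σ`
satisfies `g a ≤ b`, then `M(Π) ⊆ M(Σ)`. -/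
theorem stmt5 (P : IntervalPartition) (g : ℕ → ℕ) (hg : EvMaj (FPart P) g)
    (S : IntervalPartition) (hS : ∀ j : ℕ, g (S.e j) ≤ S.e (j + 1) - 1) :
    MSet P ⊆ MSet S := by
  rintro x ⟨hxinf, hxfin⟩
  refine ⟨hxinf, ?_⟩
  obtain ⟨K, hK⟩ := Filter.eventually_atTop.mp hg
  obtain ⟨N, hN⟩ := hxfin.bddAbove
  set C := max K (P.e (N + 1)) with hC
  apply Set.Finite.subset (Set.finite_Iio (C + 1))
  intro j hj
  by_contra hjC
  simp only [Set.mem_Iio, not_lt] at hjC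
  have haj : C + 1 ≤ S.e j := le_trans hjC (S.mono.le_apply)
  set a := S.e j with ha
  set n := idx P a with hn
  have h1 : P.e n ≤ a := Nat.findGreatest_spec (P := fun m => P.e m ≤ a) (Nat.zero_le a) (by simp [P.zero])
  have h2 : a < P.e (n + 1) := by
    by_contra h
    push_neg at h
    have : n + 1 ≤ n :=
      Nat.le_findGreatest (P := fun m => P.e m ≤ a) (le_trans (P.mono.le_apply) h) h
    omega
  have hF : FPart P a ≤ g a := hK a (by omega)
  have hg2 : g a ≤ S.e (j + 1) - 1 := hS j
  have hpos : 1 ≤ S.e (j + 1) := by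
    have := S.mono (Nat.succ_pos j)
    simp [S.zero] at this
    omega
  have h3 : P.e (n + 3) ≤ S.e (j + 1) := by
    have : P.e (n + 3) - 1 ≤ S.e (j + 1) - 1 := le_trans hF hg2
    omega
  have hsub : P.I (n + 1) ⊆ S.I j := by
    apply Set.Ico_subset_Ico (le_of_lt h2)
    exact le_trans (le_of_lt (P.mono (by omega))) h3
  have hmem : n + 1 ∈ {m : ℕ | P.I m ⊆ x} := hsub.trans hj
  have h4 : n + 1 ≤ N := hN hmem
  have h5 : N + 1 ≤ n := by
    apply Nat.le_findGreatest (P := fun m => P.e m ≤ a)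
    · exact le_trans (P.mono.le_apply) (by omega)
    · show P.e (N + 1) ≤ a
      omega
  omega
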